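/- Let f be twice continuously differentiable and g(U,V) = f(UVᵀ) + (λ/2)(‖U‖_F² + ‖V‖_F²). Then the Hessian quadratic form of g at W = [Uᵀ Vᵀ]ᵀ in direction D = [D_Uᵀ D_Vᵀ]ᵀ is [∇²g(W)](D,D) = ⟨Ξ(X), DDᵀ⟩ + [∇²f(X)](D_U Vᵀ + U D_Vᵀ, D_U Vᵀ + U D_Vᵀ), where X = UVᵀ and Ξ(X) = [[λI, ∇f(X)],[∇f(X)ᵀ, λI]]. -/

import Mathlib

open Matrix

noncomputable def singularValues {m n : Type*} [Fintype m] [Fintype n] [DecidableEq n]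
    (X : Matrix m n ℝ) : n → ℝ :=
  fun i => Real.sqrt ((show (Xᵀ * X).IsHermitian from Matrix.isHermitian_conjTranspose_mul_self X).eigenvalues i)

noncomputable def nuclearNorm {m n : Type*} [Fintype m] [Fintype n] [DecidableEq n]
    (X : Matrix m n ℝ) : ℝ := ∑ i, singularValues X i

noncomputable def frobNorm {m n : Type*} [Fintype m] [Fintype n] (X : Matrix m n ℝ) : ℝ :=
  Real.sqrt ((Xᵀ * X).trace)

noncomputable def matSpectralNorm {m n : Type*} [Fintype m] [Fintype n] [DecidableEq m] [DecidableEq n]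
    (X : Matrix m n ℝ) : ℝ :=
  ‖LinearMap.toContinuousLinearMap (Matrix.toEuclideanLin X)‖

noncomputable def smallestNonzeroSV {m n : Type*} [Fintype m] [Fintype n] [DecidableEq n]
    (X : Matrix m n ℝ) : ℝ :=
  sInf {s | (∃ i, singularValues X i = s) ∧ s ≠ 0}

noncomputable def distO {n r : ℕ} (W₁ W₂ : Matrix (Fin n) (Fin r) ℝ) : ℝ :=
  sInf {d | ∃ R : Matrix (Fin r) (Fin r) ℝ, Rᵀ * R = 1 ∧ d = frobNorm (W₁ - W₂ * R)}

attribute [local instance] Matrix.normedAddCommGroup Matrix.normedSpace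

section

attribute [-instance] instTopologicalSpaceMatrix Matrix.instUniformSpace

noncomputable def Bc (p q r : ℕ) :
    (Matrix (Fin p) (Fin r) ℝ × Matrix (Fin q) (Fin r) ℝ) →L[ℝ]
    (Matrix (Fin p) (Fin r) ℝ × Matrix (Fin q) (Fin r) ℝ) →L[ℝ] Matrix (Fin p) (Fin q) ℝ :=
  LinearMap.toContinuousLinearMap
  { toFun := fun W => LinearMap.toContinuousLinearMap
      { toFun := fun D => W.1 * D.2ᵀ
        map_add' := by intros; simp [Matrix.transpose_add, Matrix.mul_add]
        map_smul' := by intros; simp [Matrix.transpose_smul, Matrix.mul_smul] }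
    map_add' := by
      intro x y; refine ContinuousLinearMap.ext fun D => ?_
      simp [LinearMap.coe_toContinuousLinearMap', ContinuousLinearMap.add_apply, Matrix.add_mul]
    map_smul' := by
      intro c x; refine ContinuousLinearMap.ext fun D => ?_
      simp [LinearMap.coe_toContinuousLinearMap', ContinuousLinearMap.smul_apply, smul_mul_assoc] }

@[simp] lemma Bc_apply (p q r : ℕ) (W D) : Bc p q r W D = W.1 * D.2ᵀ := rfl

noncomputable def Tc (p q r : ℕ) :
    (Matrix (Fin p) (Fin r) ℝ × Matrix (Fin q) (Fin r) ℝ) →L[ℝ]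
    (Matrix (Fin p) (Fin r) ℝ × Matrix (Fin q) (Fin r) ℝ) →L[ℝ] ℝ :=
  LinearMap.toContinuousLinearMap
  { toFun := fun W => LinearMap.toContinuousLinearMap
      { toFun := fun D => (W.1ᵀ * D.1).trace + (W.2ᵀ * D.2).trace
        map_add' := by intros; simp [Matrix.mul_add]; ring
        map_smul' := by intros; simp [Matrix.mul_smul]; ring }
    map_add' := by
      intro x y; refine ContinuousLinearMap.ext fun D => ?_
      simp [LinearMap.coe_toContinuousLinearMap', ContinuousLinearMap.add_apply,
        Matrix.transpose_add, Matrix.add_mul]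
      ring
    map_smul' := by
      intro c x; refine ContinuousLinearMap.ext fun D => ?_
      simp [LinearMap.coe_toContinuousLinearMap', ContinuousLinearMap.smul_apply,
        Matrix.transpose_smul, Matrix.smul_mul]
      ring }

@[simp] lemma Tc_apply (p q r : ℕ) (W D) :
    Tc p q r W D = (W.1ᵀ * D.1).trace + (W.2ᵀ * D.2).trace := rfl

end

lemma hasFDerivAt_quad {E F : Type*} [NormedAddCommGroup E] [NormedSpace ℝ E]
    [NormedAddCommGroup F] [NormedSpace ℝ F] (B : E →L[ℝ] E →L[ℝ] F) (W : E) :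
    HasFDerivAt (fun W => B W W) ((B + B.flip) W) W := by
  have hdiag : HasFDerivAt (fun x : E => (x, x))
      ((ContinuousLinearMap.id ℝ E).prod (ContinuousLinearMap.id ℝ E)) W :=
    (hasFDerivAt_id W).prodMk (hasFDerivAt_id W)
  have h := HasFDerivAt.comp (f := fun x : E => (x, x))
    (g := fun p : E × E => B p.1 p.2) W (B.isBoundedBilinearMap.hasFDerivAt (W, W)) hdiag
  convert h using 1
  ext x; simp [IsBoundedBilinearMap.deriv_apply, add_comm]
  ext x; simp [IsBoundedBilinearMap.deriv_apply, add_comm]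

lemma trace_fromBlocks' {m n : Type*} [Fintype m] [Fintype n] (A : Matrix m m ℝ)
    (B : Matrix m n ℝ) (C : Matrix n m ℝ) (D : Matrix n n ℝ) :
    (Matrix.fromBlocks A B C D).trace = A.trace + D.trace := by
  simp [Matrix.trace, Fintype.sum_sum_type]

lemma frobNorm_sq {m n : ℕ} (X : Matrix (Fin m) (Fin n) ℝ) :
    frobNorm X ^ 2 = (Xᵀ * X).trace := by
  have h : (0:ℝ) ≤ (Xᵀ * X).trace := by
    rw [Matrix.trace]
    refine Finset.sum_nonneg fun i _ => ?_
    simp only [Matrix.diag_apply, Matrix.mul_apply, Matrix.transpose_apply]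
    exact Finset.sum_nonneg fun j _ => mul_self_nonneg _
  simp [frobNorm, Real.sq_sqrt h]

set_option maxHeartbeats 2000000 in
theorem stmt16 {p q r : ℕ} (f : Matrix (Fin p) (Fin q) ℝ → ℝ)
    (hf : ContDiff ℝ 2 f) (l : ℝ) (hl : 0 < l)
    (gradf : Matrix (Fin p) (Fin q) ℝ → Matrix (Fin p) (Fin q) ℝ)
    (hgrad : ∀ X D, fderiv ℝ f X D = ((gradf X)ᵀ * D).trace)
    (U DU : Matrix (Fin p) (Fin r) ℝ) (V DV : Matrix (Fin q) (Fin r) ℝ) :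
    iteratedFDeriv ℝ 2 (fun W : Matrix (Fin p) (Fin r) ℝ × Matrix (Fin q) (Fin r) ℝ =>
        f (W.1 * W.2ᵀ) + l / 2 * (frobNorm W.1 ^ 2 + frobNorm W.2 ^ 2)) (U, V)
        ![(DU, DV), (DU, DV)]
      = ((fromBlocks (l • (1 : Matrix (Fin p) (Fin p) ℝ)) (gradf (U * Vᵀ))
            (gradf (U * Vᵀ))ᵀ (l • (1 : Matrix (Fin q) (Fin q) ℝ)))ᵀ
          * (fromRows DU DV * (fromRows DU DV)ᵀ)).trace
        + iteratedFDeriv ℝ 2 f (U * Vᵀ) ![DU * Vᵀ + U * DVᵀ, DU * Vᵀ + U * DVᵀ] := by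
  classical
  have hgfun : (fun W : Matrix (Fin p) (Fin r) ℝ × Matrix (Fin q) (Fin r) ℝ =>
        f (W.1 * W.2ᵀ) + l / 2 * (frobNorm W.1 ^ 2 + frobNorm W.2 ^ 2))
      = fun W => f (Bc p q r W W) + l / 2 * Tc p q r W W := by
    funext W
    simp [frobNorm_sq]
  rw [hgfun]
  have hfd : Differentiable ℝ f := hf.differentiable (by norm_num)
  have hGd : ∀ W : Matrix (Fin p) (Fin r) ℝ × Matrix (Fin q) (Fin r) ℝ,
      HasFDerivAt (fun W => f (Bc p q r W W) + l / 2 * Tc p q r W W)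
        ((fderiv ℝ f (Bc p q r W W)).comp ((Bc p q r + (Bc p q r).flip) W)
          + (l / 2) • ((Tc p q r + (Tc p q r).flip) W)) W := by
    intro W
    have h1 : HasFDerivAt (fun W => f (Bc p q r W W))
        ((fderiv ℝ f (Bc p q r W W)).comp ((Bc p q r + (Bc p q r).flip) W)) W :=
      HasFDerivAt.comp (f := fun W => Bc p q r W W) W (hfd (Bc p q r W W)).hasFDerivAt
        (hasFDerivAt_quad (Bc p q r) W)
    have h2 : HasFDerivAt (fun W => l / 2 * Tc p q r W W)
        ((l / 2) • ((Tc p q r + (Tc p q r).flip) W)) W :=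
      (hasFDerivAt_quad (Tc p q r) W).const_mul (l / 2)
    exact h1.add h2
  have hfderivg : fderiv ℝ (fun W => f (Bc p q r W W) + l / 2 * Tc p q r W W)
      = fun W => (fderiv ℝ f (Bc p q r W W)).comp ((Bc p q r + (Bc p q r).flip) W)
          + (l / 2) • ((Tc p q r + (Tc p q r).flip) W) :=
    funext fun W => (hGd W).fderiv
  have hf1 := hf.fderiv_right (m := 1) (by norm_num)
  have hu : HasFDerivAt (fun W => fderiv ℝ f (Bc p q r W W))
      ((fderiv ℝ (fderiv ℝ f) (Bc p q r (U, V) (U, V))).comp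
        ((Bc p q r + (Bc p q r).flip) (U, V))) (U, V) :=
    HasFDerivAt.comp (f := fun W => Bc p q r W W) (U, V)
      ((hf1.differentiable one_ne_zero) (Bc p q r (U, V) (U, V))).hasFDerivAt
      (hasFDerivAt_quad (Bc p q r) (U, V))
  have hv : HasFDerivAt (fun W => (Bc p q r + (Bc p q r).flip) W)
      (Bc p q r + (Bc p q r).flip) (U, V) := (Bc p q r + (Bc p q r).flip).hasFDerivAt
  have hterm1 := hu.clm_comp hv
  have hterm2 : HasFDerivAt (fun W => (l / 2) • ((Tc p q r + (Tc p q r).flip) W))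
      ((l / 2) • (Tc p q r + (Tc p q r).flip)) (U, V) :=
    ((Tc p q r + (Tc p q r).flip).hasFDerivAt).const_smul (l / 2)
  have hG' := hterm1.add hterm2
  rw [show iteratedFDeriv ℝ 2 (fun W => f (Bc p q r W W) + l / 2 * Tc p q r W W) (U, V)
      ![(DU, DV), (DU, DV)] = fderiv ℝ (fderiv ℝ (fun W => f (Bc p q r W W) + l / 2 * Tc p q r W W))
      (U, V) (DU, DV) (DU, DV) from iteratedFDeriv_two_apply _ _ _, hfderivg]
  erw [hG'.fderiv]
  rw [show iteratedFDeriv ℝ 2 f (U * Vᵀ) ![DU * Vᵀ + U * DVᵀ, DU * Vᵀ + U * DVᵀ]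
      = fderiv ℝ (fderiv ℝ f) (U * Vᵀ) (DU * Vᵀ + U * DVᵀ) (DU * Vᵀ + U * DVᵀ)
      from iteratedFDeriv_two_apply _ _ _]
  simp only [ContinuousLinearMap.add_apply, ContinuousLinearMap.coe_comp', Function.comp_apply,
    ContinuousLinearMap.compL_apply, ContinuousLinearMap.flip_apply,
    ContinuousLinearMap.smul_apply, ContinuousLinearMap.coe_smul', Pi.smul_apply,
    Bc_apply, Tc_apply]
  change fderiv ℝ f (U * Vᵀ) (DU * DVᵀ + DU * DVᵀ)
      + fderiv ℝ (fderiv ℝ f) (U * Vᵀ) (U * DVᵀ + DU * Vᵀ) (U * DVᵀ + DU * Vᵀ)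
      + l / 2 * ((DUᵀ * DU).trace + (DVᵀ * DV).trace + ((DUᵀ * DU).trace + (DVᵀ * DV).trace)) = _
  have hsymm : U * DVᵀ + DU * Vᵀ = DU * Vᵀ + U * DVᵀ := add_comm _ _
  rw [hsymm, hgrad]
  have hrows : DU.fromRows DV * (DU.fromRows DV)ᵀ
      = fromBlocks (DU * DUᵀ) (DU * DVᵀ) (DV * DUᵀ) (DV * DVᵀ) := by
    rw [Matrix.transpose_fromRows, Matrix.fromRows_mul_fromCols]
  rw [hrows, Matrix.fromBlocks_transpose, Matrix.fromBlocks_multiply]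
  rw [trace_fromBlocks']
  have hGtr : (gradf (U * Vᵀ) * (DV * DUᵀ)).trace
      = ((gradf (U * Vᵀ))ᵀ * (DU * DVᵀ)).trace := by
    rw [← Matrix.trace_transpose (gradf (U * Vᵀ) * (DV * DUᵀ)), Matrix.transpose_mul,
      Matrix.transpose_mul, Matrix.transpose_transpose, Matrix.trace_mul_comm]
  simp only [Matrix.transpose_smul, Matrix.transpose_one, Matrix.transpose_transpose,
    Matrix.smul_mul, Matrix.one_mul, Matrix.trace_add, Matrix.trace_smul, smul_eq_mul,
    Matrix.mul_add, hGtr]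
  rw [Matrix.trace_mul_comm DUᵀ DU, Matrix.trace_mul_comm DVᵀ DV]
  ring
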